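/- Carathéodory's theorem for ordered factor hyperfields: let H = F/U be an ordered factor hyperfield and T ⊆ H^d. If q ∈ conv(T), then q lies in a convex combination of at most d+1 points of T. -/

import Mathlib

/-- The data of a hyperfield: a multivalued addition, multiplication,
negation, zero and one. -/
structure HyperfieldData (H : Type*) where
  hadd : H → H → Set H
  mul : H → H → H
  neg : H → H
  zero : H
  one : H

/-- The hyperfield axioms. -/
structure IsHyperfield {H : Type*} (D : HyperfieldData H) : Prop where
  hadd_nonempty : ∀ a b, (D.hadd a b).Nonempty
  hadd_comm : ∀ a b, D.hadd a b = D.hadd b a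
  hadd_assoc : ∀ a b c, (⋃ x ∈ D.hadd a b, D.hadd x c) = ⋃ y ∈ D.hadd b c, D.hadd a y
  zero_hadd : ∀ a, D.hadd D.zero a = {a}
  neg_mem : ∀ a, D.zero ∈ D.hadd a (D.neg a)
  neg_unique : ∀ a b, D.zero ∈ D.hadd a b → b = D.neg a
  reverse : ∀ a b c, a ∈ D.hadd b c ↔ c ∈ D.hadd a (D.neg b)
  mul_comm : ∀ a b, D.mul a b = D.mul b a
  mul_assoc : ∀ a b c, D.mul (D.mul a b) c = D.mul a (D.mul b c)
  one_mul : ∀ a, D.mul D.one a = a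
  mul_inv : ∀ a, a ≠ D.zero → ∃ b, D.mul a b = D.one
  zero_mul : ∀ a, D.mul D.zero a = D.zero
  distrib : ∀ a b c, D.mul a '' D.hadd b c = D.hadd (D.mul a b) (D.mul a c)
  zero_ne_one : D.zero ≠ D.one

/-- An ordering on a hyperfield: a set of positive elements closed under
hyperaddition and multiplication such that `H = P ⊔ {0} ⊔ (-P)`. -/
def IsOrdering {H : Type*} (D : HyperfieldData H) (P : Set H) : Prop :=
  (∀ a ∈ P, ∀ b ∈ P, D.hadd a b ⊆ P) ∧
  (∀ a ∈ P, ∀ b ∈ P, D.mul a b ∈ P) ∧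
  (∀ x : H, x ∈ P ∨ x = D.zero ∨ x ∈ D.neg '' P) ∧
  D.zero ∉ P ∧ D.zero ∉ D.neg '' P ∧ Disjoint P (D.neg '' P)

/-- A hyperfield homomorphism. -/
def IsHom {H1 H2 : Type*} (D1 : HyperfieldData H1) (D2 : HyperfieldData H2)
    (f : H1 → H2) : Prop :=
  (∀ a b, f '' D1.hadd a b ⊆ D2.hadd (f a) (f b)) ∧
  (∀ a b, f (D1.mul a b) = D2.mul (f a) (f b)) ∧
  f D1.one = D2.one ∧ f D1.zero = D2.zero

/-- The iterated hypersum of a finite list of elements. -/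
def listSum {H : Type*} (D : HyperfieldData H) : List H → Set H
  | [] => {D.zero}
  | x :: xs => ⋃ s ∈ listSum D xs, D.hadd x s

/-- The coordinatewise set `a ⊙ p ⊞ b ⊙ q ⊆ H^ι`. -/
def combo {H ι : Type*} (D : HyperfieldData H) (a b : H) (p q : ι → H) : Set (ι → H) :=
  {r | ∀ i, r i ∈ D.hadd (D.mul a (p i)) (D.mul b (q i))}

/-- A convex subset of `H^ι`. -/
def IsConvexSet {H ι : Type*} (D : HyperfieldData H) (P : Set H) (S : Set (ι → H)) : Prop :=
  ∀ p ∈ S, ∀ q ∈ S, ∀ a ∈ P, ∀ b ∈ P, D.one ∈ D.hadd a b → combo D a b p q ⊆ S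

/-- A conic subset of `H^ι`. -/
def IsConicSet {H ι : Type*} (D : HyperfieldData H) (P : Set H) (S : Set (ι → H)) : Prop :=
  ∀ p ∈ S, ∀ q ∈ S, ∀ a ∈ P, ∀ b ∈ P, combo D a b p q ⊆ S

/-- Membership in the convex hull of `T`: `q` lies in some finite convex
combination of points of `T` (repetition allowed). -/
def InConv {H ι : Type*} (D : HyperfieldData H) (P : Set H) (T : Set (ι → H))
    (q : ι → H) : Prop :=
  ∃ l : List (H × (ι → H)), l ≠ [] ∧ (∀ x ∈ l, x.1 ∈ P ∧ x.2 ∈ T) ∧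
    D.one ∈ listSum D (l.map Prod.fst) ∧
    ∀ i, q i ∈ listSum D (l.map fun x => D.mul x.1 (x.2 i))

/-- Membership in the conic hull of `T`. -/
def InCone {H ι : Type*} (D : HyperfieldData H) (P : Set H) (T : Set (ι → H))
    (q : ι → H) : Prop :=
  ∃ l : List (H × (ι → H)), l ≠ [] ∧ (∀ x ∈ l, x.1 ∈ P ∧ x.2 ∈ T) ∧
    ∀ i, q i ∈ listSum D (l.map fun x => D.mul x.1 (x.2 i))

/-- The setoid on `F` whose classes are the cosets of the multiplicative
subgroup `U ⊆ Fˣ`. -/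
def factorSetoid {F : Type*} [Field F] (U : Subgroup Fˣ) : Setoid F where
  r a b := ∃ u : Fˣ, u ∈ U ∧ b = a * u
  iseqv := ⟨fun a => ⟨1, U.one_mem, by simp⟩,
    fun {a b} h => by
      obtain ⟨u, hu, rfl⟩ := h
      exact ⟨u⁻¹, U.inv_mem hu, by rw [mul_assoc]; simp⟩,
    fun {a b c} h1 h2 => by
      obtain ⟨u, hu, rfl⟩ := h1
      obtain ⟨v, hv, rfl⟩ := h2
      exact ⟨u * v, U.mul_mem hu hv, by rw [Units.val_mul, mul_assoc]⟩⟩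

/-- The underlying set of the factor hyperfield `F/U`. -/
abbrev FQuot {F : Type*} [Field F] (U : Subgroup Fˣ) := Quotient (factorSetoid U)

/-- The quotient map `τ : F → F/U`. -/
def tauF {F : Type*} [Field F] (U : Subgroup Fˣ) : F → FQuot U :=
  Quotient.mk (factorSetoid U)

/-- The hyperfield data of the factor hyperfield `F/U`. -/
noncomputable def factorData {F : Type*} [Field F] (U : Subgroup Fˣ) :
    HyperfieldData (FQuot U) where
  hadd x y := {z | ∃ a b : F, tauF U a = x ∧ tauF U b = y ∧ tauF U (a + b) = z}
  mul x y := tauF U (Quotient.out x * Quotient.out y)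
  neg x := tauF U (-(Quotient.out x))
  zero := tauF U 0
  one := tauF U 1

section Lemmas
variable {F : Type*} [Field F] (U : Subgroup Fˣ)

lemma tauF_eq_iff {a b : F} :
    tauF U a = tauF U b ↔ ∃ u : Fˣ, u ∈ U ∧ b = a * u := by
  constructor
  · intro h
    exact Quotient.exact (s := factorSetoid U) h
  · intro h
    exact Quot.sound h

lemma tauF_mul_unit {a : F} {u : Fˣ} (hu : u ∈ U) : tauF U (a * u) = tauF U a :=
  ((tauF_eq_iff U).2 ⟨u, hu, rfl⟩).symm

lemma tauF_out (x : FQuot U) : tauF U x.out = x := Quotient.out_eq x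

lemma factor_mul (a b : F) :
    (factorData U).mul (tauF U a) (tauF U b) = tauF U (a * b) := by
  obtain ⟨u, hu, hu'⟩ := (tauF_eq_iff U).1 (tauF_out U (tauF U a)).symm
  obtain ⟨v, hv, hv'⟩ := (tauF_eq_iff U).1 (tauF_out U (tauF U b)).symm
  show tauF U ((tauF U a).out * (tauF U b).out) = tauF U (a * b)
  rw [hu', hv']
  have : a * u * (b * v) = a * b * (↑(u * v) : F) := by
    push_cast; ring
  rw [this, tauF_mul_unit U (U.mul_mem hu hv)]

lemma mem_listSum_iff (L : List (FQuot U)) (z : FQuot U) :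
    z ∈ listSum (factorData U) L ↔
      ∃ A : List F, A.map (tauF U) = L ∧ tauF U A.sum = z := by
  induction L generalizing z with
  | nil =>
    simp only [listSum, Set.mem_singleton_iff]
    constructor
    · rintro rfl; exact ⟨[], rfl, by simp [factorData]⟩
    · rintro ⟨A, hA, hs⟩
      rw [List.map_eq_nil_iff] at hA
      subst hA; simpa [factorData] using hs.symm
  | cons x xs ih =>
    simp only [listSum, Set.mem_iUnion, exists_prop]
    constructor
    · rintro ⟨s, hs, a, b, ha, hb, hab⟩
      obtain ⟨A, hA, hAs⟩ := (ih s).1 hs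
      obtain ⟨u, hu, rfl⟩ := (tauF_eq_iff U).1 (hAs.trans hb.symm)
      refine ⟨a :: A.map (· * (u : F)), ?_, ?_⟩
      · simp only [List.map_cons, List.map_map, ha]
        congr 1
        · rw [← hA]; congr 1
          funext y
          exact tauF_mul_unit U hu
      · rw [List.sum_cons]
        have : (A.map (· * (u : F))).sum = A.sum * u := by
          simpa using (List.sum_map_mul_right A id (u : F))
        rw [this, hab]
    · rintro ⟨A, hA, hs⟩
      match A, hA with
      | a :: A', hA =>
        simp only [List.map_cons, List.cons.injEq] at hA
        obtain ⟨ha, hA'⟩ := hA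
        refine ⟨tauF U A'.sum, (ih _).2 ⟨A', hA', rfl⟩, a, A'.sum, ha, rfl, by
          simpa using hs⟩

lemma list_sum_eq_fin {M : Type*} [AddCommMonoid M] (L : List M) {n : ℕ}
    (h : L.length = n) :
    L.sum = ∑ j : Fin n, L.get (Fin.cast h.symm j) := by
  subst h
  conv_lhs => rw [← List.ofFn_get L]
  rw [List.sum_ofFn]
  rfl

end Lemmas

section Ordered
variable {F : Type*} [Field F] [LinearOrder F] [IsStrictOrderedRing F] (U : Subgroup Fˣ)

lemma mem_pos_iff (hU : ∀ u : Fˣ, u ∈ U → (0 : F) < (u : F)) {a : F} :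
    tauF U a ∈ tauF U '' {x : F | 0 < x} ↔ 0 < a := by
  constructor
  · rintro ⟨b, hb, hba⟩
    obtain ⟨u, hu, rfl⟩ := (tauF_eq_iff U).1 hba
    exact mul_pos hb (hU u hu)
  · intro ha; exact ⟨a, ha, rfl⟩

end Ordered

/-- Carathéodory's theorem for ordered factor hyperfields: any
point of `conv(T) ⊆ H^d` lies in a convex combination of at most `d + 1`
points of `T`. -/
theorem stmt17 {F : Type*} [Field F] [LinearOrder F] [IsStrictOrderedRing F] (U : Subgroup Fˣ)
    (hU : ∀ u : Fˣ, u ∈ U → (0 : F) < (u : F)) {d : ℕ}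
    (T : Set (Fin d → FQuot U)) (q : Fin d → FQuot U)
    (hq : InConv (factorData U) (tauF U '' {x : F | 0 < x}) T q) :
    ∃ l : List (FQuot U × (Fin d → FQuot U)), l.length ≤ d + 1 ∧ l ≠ [] ∧
      (∀ x ∈ l, x.1 ∈ tauF U '' {x : F | 0 < x} ∧ x.2 ∈ T) ∧
      (factorData U).one ∈ listSum (factorData U) (l.map Prod.fst) ∧
      ∀ i, q i ∈ listSum (factorData U)
        (l.map fun x => (factorData U).mul x.1 (x.2 i)) := by
  classical
  obtain ⟨l, hl0, hlmem, hone, hqi⟩ := hq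
  set n := l.length with hn
  have hnpos : 0 < n := List.length_pos_iff.2 hl0
  obtain ⟨A, hAmap, hAsum⟩ := (mem_listSum_iff U _ _).1 hone
  choose B hBmap hBsum using fun i => (mem_listSum_iff U _ _).1 (hqi i)
  have hAlen : A.length = n := by
    have := congrArg List.length hAmap; simpa using this
  have hBlen : ∀ i, (B i).length = n := fun i => by
    have := congrArg List.length (hBmap i); simpa using this
  set a : Fin n → F := fun j => A.get (Fin.cast hAlen.symm j) with ha_def
  set bf : Fin d → Fin n → F := fun i j => (B i).get (Fin.cast (hBlen i).symm j)
    with hbf_def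
  have hta : ∀ j : Fin n, tauF U (a j) = (l.get j).1 := by
    intro j
    have h := List.getElem_of_eq hAmap
      (show (j : ℕ) < (A.map (tauF U)).length by simp [hAlen])
    simpa [ha_def, List.get_eq_getElem] using h
  have htb : ∀ (i : Fin d) (j : Fin n),
      tauF U (bf i j) = (factorData U).mul (l.get j).1 ((l.get j).2 i) := by
    intro i j
    have h := List.getElem_of_eq (hBmap i)
      (show (j : ℕ) < ((B i).map (tauF U)).length by simp [hBlen i])
    simpa [hbf_def, List.get_eq_getElem] using h
  have hapos : ∀ j, 0 < a j := by
    intro j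
    refine (mem_pos_iff U hU).1 ?_
    rw [hta j]
    exact (hlmem _ (List.get_mem l j)).1
  set p : Fin n → Fin d → F := fun j i => bf i j / a j with hp_def
  have htp : ∀ j i, tauF U (p j i) = (l.get j).2 i := by
    intro j i
    have h1 : tauF U (a j * ((l.get j).2 i).out) = tauF U (bf i j) := by
      rw [htb i j, ← factor_mul, tauF_out, hta]
    obtain ⟨u, hu, hbu⟩ := (tauF_eq_iff U).1 h1
    have h2 : p j i = ((l.get j).2 i).out * u := by
      have haj := (hapos j).ne'
      simp only [hp_def]
      rw [hbu]
      field_simp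
    rw [h2, tauF_mul_unit U hu, tauF_out]
  have hAsum' : A.sum = ∑ j, a j := list_sum_eq_fin A hAlen
  have hBsum' : ∀ i, (B i).sum = ∑ j, bf i j := fun i => list_sum_eq_fin (B i) (hBlen i)
  have hAsum1 : tauF U A.sum = tauF U 1 := hAsum
  obtain ⟨u0, hu0U, hu0⟩ := (tauF_eq_iff U).1 hAsum1
  have hs0pos : 0 < A.sum := by
    rw [hAsum']
    exact Finset.sum_pos (fun j _ => hapos j) ⟨⟨0, hnpos⟩, Finset.mem_univ _⟩
  have htdiv : ∀ y : F, tauF U (y / A.sum) = tauF U y := by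
    intro y
    have h1 : y / A.sum = y * u0 := by
      rw [div_eq_iff hs0pos.ne']
      linear_combination y * hu0
    rw [h1, tauF_mul_unit U hu0U]
  set lam : Fin n → F := fun j => a j / A.sum with hlam_def
  set r : Fin d → F := fun i => (B i).sum / A.sum with hr_def
  have htr : ∀ i, tauF U (r i) = q i := fun i => (htdiv _).trans (hBsum i)
  have hlampos : ∀ j, 0 < lam j := fun j => div_pos (hapos j) hs0pos
  have hlamsum : ∑ j, lam j = 1 := by
    simp only [hlam_def]
    rw [← Finset.sum_div, ← hAsum']
    field_simp
  have hrcomb : r = ∑ j, lam j • p j := by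
    funext i
    rw [Finset.sum_apply]
    simp only [Pi.smul_apply, smul_eq_mul, hlam_def, hp_def, hr_def]
    rw [hBsum' i, Finset.sum_div]
    refine Finset.sum_congr rfl fun j _ => ?_
    have haj := (hapos j).ne'
    field_simp
  have hrconv : r ∈ convexHull F (Set.range p) := by
    rw [hrcomb, ← Finset.centerMass_eq_of_sum_1 _ _ hlamsum]
    exact Finset.centerMass_mem_convexHull _ (fun j _ => (hlampos j).le)
      (by rw [hlamsum]; norm_num) (fun j _ => ⟨j, rfl⟩)
  obtain ⟨ι, hι, zz, w, hrange, hai, hwpos, hwsum, hcomb⟩ :=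
    eq_pos_convex_span_of_mem_convexHull hrconv
  letI : Fintype ι := hι
  have hcard : Fintype.card ι ≤ d + 1 := by
    have h1 := hai.card_le_finrank_succ
    have h2 : Module.finrank F ↥(vectorSpan F (Set.range zz)) ≤
        Module.finrank F (Fin d → F) := Submodule.finrank_le _
    have h3 : Module.finrank F (Fin d → F) = d := Module.finrank_fin_fun F
    omega
  have hnel : Nonempty ι := by
    by_contra h
    rw [not_nonempty_iff] at h
    rw [Finset.univ_eq_empty, Finset.sum_empty] at hwsum
    exact zero_ne_one hwsum
  refine ⟨(Finset.univ : Finset ι).toList.map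
    (fun k => (tauF U (w k), fun i => tauF U (zz k i))), ?_, ?_, ?_, ?_, ?_⟩
  · simpa using hcard
  · have h6 : 0 < ((Finset.univ : Finset ι).toList.map
        (fun k => (tauF U (w k), fun i => tauF U (zz k i)))).length := by
      simpa using Fintype.card_pos
    exact List.ne_nil_of_length_pos h6
  · rintro x hx
    simp only [List.mem_map, Finset.mem_toList] at hx
    obtain ⟨k, -, rfl⟩ := hx
    constructor
    · exact ⟨w k, hwpos k, rfl⟩
    · obtain ⟨j, hj⟩ := hrange ⟨k, rfl⟩
      have h4 : (fun i => tauF U (zz k i)) = (l.get j).2 := by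
        funext i; rw [← hj]; exact htp j i
      rw [h4]
      exact (hlmem _ (List.get_mem l j)).2
  · refine (mem_listSum_iff U _ _).2 ⟨Finset.univ.toList.map w, ?_, ?_⟩
    · simp [List.map_map, Function.comp]
    · have hsum : (Finset.univ.toList.map w).sum = ∑ k, w k :=
        Finset.sum_map_toList _ _
      rw [hsum, hwsum]
      rfl
  · intro i
    refine (mem_listSum_iff U _ _).2
      ⟨Finset.univ.toList.map (fun k => w k * zz k i), ?_, ?_⟩
    · simp [List.map_map, Function.comp, factor_mul]
    · have hsum : (Finset.univ.toList.map (fun k => w k * zz k i)).sum =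
        ∑ k, w k * zz k i := Finset.sum_map_toList _ _
      rw [hsum]
      have h5 : ∑ k, w k * zz k i = r i := by
        have := congrFun hcomb i
        simpa [Finset.sum_apply, Pi.smul_apply, smul_eq_mul] using this
      rw [h5, htr]
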